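/- arXiv:2108.09483 — 10 statements merged into one kernel-verified Lean document; each statement's English description precedes it below -/
import Mathlib

section
/- Let n ≥ 5, let 0 < λ ≤ 1/4 and r > 0. Let p_u = (0, 1/2) and p_v = (0, −1/2) in ℝ², and let p_0, p_1, …, p_{n−3} ∈ ℝ² satisfy: p_0 = (r, 0); p_i = (1/2 − λ)·p_u + (1/2 − λ)·p_v + λ·p_{i−1} + λ·p_{i+1} for every i with 1 ≤ i ≤ n − 4; and p_{n−3} = (1/2 − λ/2)·p_u + (1/2 − λ/2)·p_v + λ·p_{n−4}. Suppose moreover that the first coordinates are strictly decreasing: the x-coordinate of p_{i+1} is less than the x-coordinate of p_i for 0 ≤ i ≤ n − 4. Then the second coordinate of p_i equals 0 for every i with 1 ≤ i ≤ n − 3, and the x-coordinate of p_{n−4} is at most r·(λ/(1−λ))^{n−4}. -/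
/-- Analysis of the Floater drawing of the Eades–Garvan graph: the internal vertices
lie on the `x`-axis and their `x`-coordinates decrease geometrically. -/
theorem eades_garvan_drawing (n : ℕ) (hn : 5 ≤ n)
    (lam r : ℝ) (hlam : 0 < lam) (hlam4 : lam ≤ 1 / 4) (hr : 0 < r)
    (pu pv : ℝ × ℝ) (hpu : pu = (0, 1 / 2)) (hpv : pv = (0, -(1 / 2)))
    (p : ℕ → ℝ × ℝ) (hp0 : p 0 = (r, 0))
    (hrec : ∀ i, 1 ≤ i → i ≤ n - 4 →
      p i = (1 / 2 - lam) • pu + (1 / 2 - lam) • pv + lam • p (i - 1) + lam • p (i + 1))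
    (hlast : p (n - 3) = (1 / 2 - lam / 2) • pu + (1 / 2 - lam / 2) • pv + lam • p (n - 4))
    (hdec : ∀ i, i ≤ n - 4 → (p (i + 1)).1 < (p i).1) :
    (∀ i, 1 ≤ i → i ≤ n - 3 → (p i).2 = 0) ∧
    (p (n - 4)).1 ≤ r * (lam / (1 - lam)) ^ (n - 4) := by
  set m := n - 4 with hm
  have hm1 : 1 ≤ m := by omega
  have hn3 : n - 3 = m + 1 := by omega
  rw [hn3] at hlast ⊢
  have hrec2 : ∀ i, 1 ≤ i → i ≤ m → (p i).2 = lam * (p (i-1)).2 + lam * (p (i+1)).2 := by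
    intro i h1 h2
    have h := congrArg Prod.snd (hrec i h1 h2)
    simp only [hpu, hpv, Prod.snd_add, Prod.smul_snd, smul_eq_mul] at h
    linarith [h]
  have hrec1 : ∀ i, 1 ≤ i → i ≤ m → (p i).1 = lam * (p (i-1)).1 + lam * (p (i+1)).1 := by
    intro i h1 h2
    have h := congrArg Prod.fst (hrec i h1 h2)
    simp only [hpu, hpv, Prod.fst_add, Prod.smul_fst, smul_eq_mul, mul_zero] at h
    linarith [h]
  have hl2 : (p (m+1)).2 = lam * (p m).2 := by
    have h := congrArg Prod.snd hlast
    simp only [hpu, hpv, Prod.snd_add, Prod.smul_snd, smul_eq_mul] at h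
    linarith [h]
  have hl1 : (p (m+1)).1 = lam * (p m).1 := by
    have h := congrArg Prod.fst hlast
    simp only [hpu, hpv, Prod.fst_add, Prod.smul_fst, smul_eq_mul, mul_zero] at h
    linarith [h]
  -- Backward induction: each y-coordinate is a small multiple of the previous one
  have Qb : ∀ j, j ≤ m → ∃ c : ℝ, 0 ≤ c ∧ c ≤ 1/2 ∧ (p (m + 1 - j)).2 = c * (p (m - j)).2 := by
    intro j
    induction j with
    | zero => intro _; exact ⟨lam, hlam.le, by linarith, by simpa using hl2⟩
    | succ j ih =>
      intro hj
      obtain ⟨c, hc0, hc2, hcy⟩ := ih (by omega)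
      have hi1 : 1 ≤ m - j := by omega
      have hrw : m + 1 - j = (m - j) + 1 := by omega
      rw [hrw] at hcy
      have h := hrec2 (m - j) hi1 (by omega)
      have hpos : 0 < 1 - lam * c := by nlinarith
      refine ⟨lam / (1 - lam * c), by positivity, ?_, ?_⟩
      · rw [div_le_iff₀ hpos]; nlinarith
      · have e1 : m + 1 - (j+1) = m - j := by omega
        have e2 : m - (j+1) = m - j - 1 := by omega
        rw [e1, e2]
        rw [hcy] at h
        field_simp
        nlinarith [h]
  have yzero : ∀ i, i ≤ m + 1 → (p i).2 = 0 := by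
    intro i
    induction i with
    | zero => intro _; simp [hp0]
    | succ i ih =>
      intro hi
      obtain ⟨c, _, _, hcy⟩ := Qb (m - i) (by omega)
      have e1 : m + 1 - (m - i) = i + 1 := by omega
      have e2 : m - (m - i) = i := by omega
      rw [e1, e2] at hcy
      rw [hcy, ih (by omega), mul_zero]
  have hxm : 0 < (p m).1 := by
    have hd := hdec m (le_refl m)
    rw [hl1] at hd
    nlinarith [hd]
  have xge : ∀ j, j ≤ m → (p m).1 ≤ (p (m - j)).1 := by
    intro j
    induction j with
    | zero => intro _; simp
    | succ j ih =>
      intro hj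
      have h1 := ih (by omega)
      have hd := hdec (m - (j+1)) (by omega)
      have e : m - (j+1) + 1 = m - j := by omega
      rw [e] at hd
      linarith
  have xpos : ∀ i, i ≤ m → 0 < (p i).1 := by
    intro i hi
    have h := xge (m - i) (by omega)
    have e : m - (m - i) = i := by omega
    rw [e] at h
    linarith
  have hstep : ∀ i, 1 ≤ i → i ≤ m → (p i).1 ≤ (lam / (1 - lam)) * (p (i-1)).1 := by
    intro i h1 h2
    have h := hrec1 i h1 h2
    have hd := hdec i h2
    have hlam1 : (0:ℝ) < 1 - lam := by linarith
    rw [div_mul_eq_mul_div, le_div_iff₀ hlam1]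
    nlinarith [mul_le_mul_of_nonneg_left hd.le hlam.le]
  have bound : ∀ k, k ≤ m → (p k).1 ≤ r * (lam / (1 - lam)) ^ k := by
    intro k
    induction k with
    | zero => intro _; simp [hp0]
    | succ k ih =>
      intro hk
      have h1 := ih (by omega)
      have h2 := hstep (k+1) (by omega) hk
      have e : k + 1 - 1 = k := by omega
      rw [e] at h2
      have hrho : (0:ℝ) ≤ lam / (1 - lam) := by
        apply div_nonneg hlam.le; linarith
      calc (p (k+1)).1 ≤ (lam / (1 - lam)) * (p k).1 := h2
        _ ≤ (lam / (1 - lam)) * (r * (lam / (1 - lam)) ^ k) :=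
            mul_le_mul_of_nonneg_left h1 hrho
        _ = r * (lam / (1 - lam)) ^ (k+1) := by ring
  refine ⟨fun i h1 h2 => yzero i (by omega), bound m (le_refl m)⟩
end

section
/- For any three noncollinear points A, B, C in ℝ², the resolution of the triangle ABC is at most √3/2. -/
noncomputable section

/-- The Euclidean plane. -/
abbrev Pt : Type := EuclideanSpace ℝ (Fin 2)

/-- The resolution of the triangle `A B C`: the minimum over the three vertices of the
distance from that vertex to the closed opposite side, divided by the length of the
longest side. -/
noncomputable def triResolution (A B C : Pt) : ℝ :=
  min (Metric.infDist A (segment ℝ B C))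
      (min (Metric.infDist B (segment ℝ A C)) (Metric.infDist C (segment ℝ A B))) /
  max (dist A B) (max (dist B C) (dist A C))

lemma key (A B C : Pt) (h1 : dist B C ≤ dist A B) (h2 : dist A C ≤ dist A B) :
    Metric.infDist C (segment ℝ A B) ≤ Real.sqrt 3 / 2 * dist A B := by
  have h3 : Metric.infDist C (segment ℝ A B) ≤ dist C (midpoint ℝ A B) :=
    Metric.infDist_le_dist_of_mem (midpoint_mem_segment A B)
  refine h3.trans ?_
  have hap := EuclideanGeometry.dist_sq_add_dist_sq_eq_two_mul_dist_midpoint_sq_add_half_dist_sq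
    C A B
  have hCA : dist C A = dist A C := dist_comm _ _
  have hCB : dist C B = dist B C := dist_comm _ _
  have hsq : dist C (midpoint ℝ A B) ^ 2 ≤ 3 / 4 * dist A B ^ 2 := by
    nlinarith [dist_nonneg (x := A) (y := B), dist_nonneg (x := B) (y := C),
      dist_nonneg (x := A) (y := C)]
  have hs3 : Real.sqrt 3 ^ 2 = 3 := Real.sq_sqrt (by norm_num)
  have hr : (0:ℝ) ≤ Real.sqrt 3 / 2 * dist A B := by positivity
  calc dist C (midpoint ℝ A B) = Real.sqrt (dist C (midpoint ℝ A B) ^ 2) :=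
        (Real.sqrt_sq dist_nonneg).symm
    _ ≤ Real.sqrt ((Real.sqrt 3 / 2 * dist A B) ^ 2) := Real.sqrt_le_sqrt (by nlinarith)
    _ = Real.sqrt 3 / 2 * dist A B := Real.sqrt_sq hr

/-- The resolution of any triangle is at most `√3 / 2`. -/
theorem triResolution_le (A B C : Pt) (h : ¬ Collinear ℝ ({A, B, C} : Set Pt)) :
    triResolution A B C ≤ Real.sqrt 3 / 2 := by
  have hAB : A ≠ B := by
    rintro rfl
    exact h (by simpa using collinear_pair ℝ A C)
  have hD0 : 0 < max (dist A B) (max (dist B C) (dist A C)) :=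
    lt_of_lt_of_le (dist_pos.2 hAB) (le_max_left _ _)
  rw [triResolution, div_le_iff₀ hD0]
  rcases le_total (max (dist B C) (dist A C)) (dist A B) with h1 | h1
  · -- max = dist A B
    rw [max_eq_left h1]
    have hBC := le_trans (le_max_left _ _) h1
    have hAC := le_trans (le_max_right _ _) h1
    calc min (Metric.infDist A (segment ℝ B C))
          (min (Metric.infDist B (segment ℝ A C)) (Metric.infDist C (segment ℝ A B)))
        ≤ Metric.infDist C (segment ℝ A B) := le_trans (min_le_right _ _) (min_le_right _ _)
      _ ≤ Real.sqrt 3 / 2 * dist A B := key A B C hBC hAC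
  · rw [max_eq_right h1]
    rcases le_total (dist A C) (dist B C) with h2 | h2
    · rw [max_eq_left h2]
      have hCA : dist C A ≤ dist B C := by rwa [dist_comm]
      have hBA : dist B A ≤ dist B C := by rw [dist_comm]; exact le_trans h1 (max_le le_rfl h2)
      calc min (Metric.infDist A (segment ℝ B C))
            (min (Metric.infDist B (segment ℝ A C)) (Metric.infDist C (segment ℝ A B)))
          ≤ Metric.infDist A (segment ℝ B C) := min_le_left _ _
        _ ≤ Real.sqrt 3 / 2 * dist B C := key B C A hCA hBA
    · rw [max_eq_right h2]
      have hCB : dist C B ≤ dist A C := by rwa [dist_comm]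
      have hAB' : dist A B ≤ dist A C := le_trans h1 (max_le h2 le_rfl)
      calc min (Metric.infDist A (segment ℝ B C))
            (min (Metric.infDist B (segment ℝ A C)) (Metric.infDist C (segment ℝ A B)))
          ≤ Metric.infDist B (segment ℝ A C) := le_trans (min_le_right _ _) (min_le_left _ _)
        _ ≤ Real.sqrt 3 / 2 * dist A C := key A C B hCB hAB'
end
end

section
/- Let A, B, C ∈ ℝ² be noncollinear and let r be the resolution of the triangle ABC. Then for each side of the triangle, the distance from the opposite vertex to the line through that side, divided by the length of the side, is at least r. In particular, dist(C, line through A and B) / dist(A, B) ≥ r, and similarly for the other two sides. -/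
noncomputable section

open Metric

local notation "⟪" x ", " y "⟫" => @inner ℝ _ _ x y

noncomputable def gg (P Q R : Pt) : ℝ :=
  ⟪Q - P, Q - P⟫ * ⟪R - P, R - P⟫ - ⟪Q - P, R - P⟫ ^ 2

lemma gg_nonneg (P Q R : Pt) : 0 ≤ gg P Q R := by
  have := real_inner_mul_inner_self_le (Q - P) (R - P)
  unfold gg
  nlinarith [this]

lemma gg_swap23 (P Q R : Pt) : gg P Q R = gg P R Q := by
  unfold gg
  rw [real_inner_comm (R - P) (Q - P)]
  ring_nf

lemma gg_swap12 (P Q R : Pt) : gg P Q R = gg Q P R := by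
  unfold gg
  rw [show P - Q = -(Q - P) by abel, show R - Q = (R - P) - (Q - P) by abel]
  simp only [inner_sub_left, inner_sub_right, inner_neg_left, inner_neg_right]
  simp only [real_inner_comm Q P, real_inner_comm R P, real_inner_comm R Q]
  ring

lemma line_lb (P Q R : Pt) (hPQ : P ≠ Q) :
    Real.sqrt (gg P Q R) / dist P Q ≤ infDist R (affineSpan ℝ {P, Q} : Set Pt) := by
  have hd : (0:ℝ) < dist P Q := dist_pos.2 hPQ
  have key : ∀ y ∈ (affineSpan ℝ {P, Q} : Set Pt),
      Real.sqrt (gg P Q R) / dist P Q ≤ dist R y := by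
    intro y hy
    obtain ⟨t, ht⟩ : ∃ t : ℝ, t • (Q -ᵥ P) = y -ᵥ P := by
      rw [← vadd_left_mem_affineSpan_pair]
      rwa [vsub_vadd]
    have hyv : y = t • (Q - P) + P := by
      have : t • (Q - P) = y - P := ht
      rw [this]; abel
    rw [div_le_iff₀ hd]
    have hdist : dist R y = ‖(R - P) - t • (Q - P)‖ := by
      rw [dist_eq_norm, hyv]; congr 1; abel
    have hsq : gg P Q R ≤ (dist R y * dist P Q) ^ 2 := by
      have h1 : (dist R y) ^ 2 = ⟪(R - P) - t • (Q - P), (R - P) - t • (Q - P)⟫ := by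
        rw [hdist, real_inner_self_eq_norm_sq]
      have h2 : (dist P Q) ^ 2 = ⟪Q - P, Q - P⟫ := by
        rw [dist_eq_norm, norm_sub_rev, real_inner_self_eq_norm_sq]
      have expand : ⟪(R - P) - t • (Q - P), (R - P) - t • (Q - P)⟫ =
          ⟪R - P, R - P⟫ - 2 * t * ⟪Q - P, R - P⟫ + t ^ 2 * ⟪Q - P, Q - P⟫ := by
        simp only [inner_sub_left, inner_sub_right, real_inner_smul_left,
          real_inner_smul_right]
        simp only [real_inner_comm Q P, real_inner_comm R P, real_inner_comm R Q]
        ring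
      have hgoal : gg P Q R ≤
          (⟪R - P, R - P⟫ - 2 * t * ⟪Q - P, R - P⟫ + t ^ 2 * ⟪Q - P, Q - P⟫) *
            ⟪Q - P, Q - P⟫ := by
        unfold gg
        nlinarith [sq_nonneg (t * ⟪Q - P, Q - P⟫ - ⟪Q - P, R - P⟫),
          real_inner_self_nonneg (x := Q - P)]
      calc gg P Q R ≤ _ := hgoal
        _ = (dist R y) ^ 2 * (dist P Q) ^ 2 := by rw [h1, h2, expand]
        _ = (dist R y * dist P Q) ^ 2 := by ring
    calc Real.sqrt (gg P Q R) ≤ Real.sqrt ((dist R y * dist P Q) ^ 2) :=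
          Real.sqrt_le_sqrt hsq
      _ = dist R y * dist P Q := Real.sqrt_sq (by positivity)
  by_contra hc
  push_neg at hc
  rw [infDist_lt_iff ⟨P, subset_affineSpan ℝ _ (Set.mem_insert _ _)⟩] at hc
  obtain ⟨y, hy, hlt⟩ := hc
  exact absurd (key y hy) (not_le.2 hlt)

lemma seg_ub (P Q R : Pt) (hPQ : P ≠ Q) (h1 : dist P R ≤ dist P Q)
    (h2 : dist Q R ≤ dist P Q) :
    infDist R (segment ℝ P Q) ≤ Real.sqrt (gg P Q R) / dist P Q := by
  have hd : (0:ℝ) < dist P Q := dist_pos.2 hPQ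
  set a : ℝ := ⟪Q - P, Q - P⟫ with ha
  set b : ℝ := ⟪R - P, R - P⟫ with hb
  set c : ℝ := ⟪Q - P, R - P⟫ with hc
  have ha2 : (dist P Q) ^ 2 = a := by
    rw [dist_eq_norm, norm_sub_rev, ha, real_inner_self_eq_norm_sq]
  have hapos : 0 < a := by rw [← ha2]; positivity
  have hb2 : (dist P R) ^ 2 = b := by
    rw [dist_eq_norm, norm_sub_rev, hb, real_inner_self_eq_norm_sq]
  have hbnn : 0 ≤ b := by rw [← hb2]; positivity
  have hba : b ≤ a := by
    rw [← ha2, ← hb2]; exact pow_le_pow_left₀ dist_nonneg h1 2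
  have hQR : (dist Q R) ^ 2 = b - 2 * c + a := by
    have e1 : (dist Q R) ^ 2 = ⟪(R - P) - (Q - P), (R - P) - (Q - P)⟫ := by
      rw [dist_eq_norm, norm_sub_rev, show R - Q = (R - P) - (Q - P) by abel,
        real_inner_self_eq_norm_sq]
    rw [e1, hb, hc, ha]
    simp only [inner_sub_left, inner_sub_right]
    simp only [real_inner_comm Q P, real_inner_comm R P, real_inner_comm R Q]
    ring
  have h2' : b - 2 * c + a ≤ a := by
    rw [← hQR, ← ha2]; exact pow_le_pow_left₀ dist_nonneg h2 2
  have hcnn : 0 ≤ c := by linarith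
  have hcs : c ^ 2 ≤ a * b := by
    have := real_inner_mul_inner_self_le (Q - P) (R - P)
    rw [← ha, ← hb, ← hc] at this
    nlinarith
  have hca : c ≤ a := by nlinarith
  set t : ℝ := c / a with htdef
  have ht0 : 0 ≤ t := by positivity
  have ht1 : t ≤ 1 := by rw [htdef, div_le_one hapos]; exact hca
  set x : Pt := (1 - t) • P + t • Q with hx
  have hxmem : x ∈ segment ℝ P Q := ⟨1 - t, t, by linarith, ht0, by ring, rfl⟩
  have hxe : x = t • (Q - P) + P := by rw [hx]; module
  have hdx : dist R x = ‖(R - P) - t • (Q - P)‖ := by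
    rw [dist_eq_norm, hxe]; congr 1; abel
  have hdx2 : (dist R x) ^ 2 = b - 2 * t * c + t ^ 2 * a := by
    rw [hdx, ← real_inner_self_eq_norm_sq, hb, hc, ha]
    simp only [inner_sub_left, inner_sub_right, real_inner_smul_left, real_inner_smul_right]
    simp only [real_inner_comm Q P, real_inner_comm R P, real_inner_comm R Q]
    ring
  have hgg : gg P Q R = a * b - c ^ 2 := by
    unfold gg; rw [← ha, ← hb, ← hc]
  refine le_trans (infDist_le_dist_of_mem hxmem) ?_
  rw [le_div_iff₀ hd]
  have hsq : (dist R x * dist P Q) ^ 2 ≤ gg P Q R := by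
    have : (dist R x * dist P Q) ^ 2 = (b - 2 * t * c + t ^ 2 * a) * a := by
      rw [mul_pow, hdx2, ha2]
    have heq : (b - 2 * (c / a) * c + (c / a) ^ 2 * a) * a = a * b - c ^ 2 := by
      field_simp
      ring
    rw [this, hgg, htdef, heq]
  calc dist R x * dist P Q = Real.sqrt ((dist R x * dist P Q) ^ 2) :=
        (Real.sqrt_sq (by positivity)).symm
    _ ≤ Real.sqrt (gg P Q R) := Real.sqrt_le_sqrt hsq

/-- For each side of a triangle, the distance from the opposite vertex to the line
through that side, divided by the length of the side, is at least the resolution of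
the triangle. -/
theorem height_div_side_ge_triResolution (A B C : Pt)
    (h : ¬ Collinear ℝ ({A, B, C} : Set Pt)) (r : ℝ) (hr : r = triResolution A B C) :
    r ≤ Metric.infDist C (affineSpan ℝ {A, B} : Set Pt) / dist A B ∧
    r ≤ Metric.infDist A (affineSpan ℝ {B, C} : Set Pt) / dist B C ∧
    r ≤ Metric.infDist B (affineSpan ℝ {A, C} : Set Pt) / dist A C := by
  have hAB : A ≠ B := by
    rintro rfl
    apply h
    have e : ({A, A, C} : Set Pt) = {A, C} := by simp
    rw [e]; exact collinear_pair ℝ A C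
  have hBC : B ≠ C := by
    rintro rfl
    apply h
    have e : ({A, B, B} : Set Pt) = {A, B} := by simp
    rw [e]; exact collinear_pair ℝ A B
  have hAC : A ≠ C := by
    rintro rfl
    apply h
    have e : ({A, B, A} : Set Pt) = {A, B} := by
      ext x; simp; tauto
    rw [e]; exact collinear_pair ℝ A B
  subst hr
  unfold triResolution
  set M := max (dist A B) (max (dist B C) (dist A C)) with hMdef
  have h1 : dist A B ≤ M := le_max_left _ _
  have h2 : dist B C ≤ M := le_trans (le_max_left _ _) (le_max_right _ _)
  have h3 : dist A C ≤ M := le_trans (le_max_right _ _) (le_max_right _ _)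
  have hMpos : 0 < M := lt_of_lt_of_le (dist_pos.2 hAB) h1
  set G := gg A B C with hG
  have hGBCA : gg B C A = G := by
    rw [hG, gg_swap23 B C A, gg_swap12 B A C]
  have hGACB : gg A C B = G := by
    rw [hG, gg_swap23 A C B]
  have hmax : M = dist A B ∨ M = dist B C ∨ M = dist A C := by
    rcases max_choice (dist A B) (max (dist B C) (dist A C)) with h' | h'
    · exact Or.inl h'
    · rcases max_choice (dist B C) (dist A C) with h'' | h''
      · exact Or.inr (Or.inl (h'.trans h''))
      · exact Or.inr (Or.inr (h'.trans h''))
  have hm : min (Metric.infDist A (segment ℝ B C))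
      (min (Metric.infDist B (segment ℝ A C)) (Metric.infDist C (segment ℝ A B)))
      ≤ Real.sqrt G / M := by
    rcases hmax with hM' | hM' | hM'
    · refine le_trans (le_trans (min_le_right _ _) (min_le_right _ _)) ?_
      rw [hM']
      exact seg_ub A B C hAB (hM' ▸ h3) (hM' ▸ h2)
    · refine le_trans (min_le_left _ _) ?_
      rw [hM']
      have e := seg_ub B C A hBC (by rw [dist_comm B A]; exact hM' ▸ h1)
        (by rw [dist_comm C A]; exact hM' ▸ h3)
      rwa [hGBCA] at e
    · refine le_trans (le_trans (min_le_right _ _) (min_le_left _ _)) ?_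
      rw [hM']
      have e := seg_ub A C B hAC (hM' ▸ h1) (by rw [dist_comm C B]; exact hM' ▸ h2)
      rwa [hGACB] at e
  have key : min (Metric.infDist A (segment ℝ B C))
      (min (Metric.infDist B (segment ℝ A C)) (Metric.infDist C (segment ℝ A B))) / M
      ≤ Real.sqrt G / M ^ 2 := by
    calc _ ≤ (Real.sqrt G / M) / M := by gcongr
      _ = Real.sqrt G / M ^ 2 := by rw [div_div, sq]
  have hGnn : 0 ≤ Real.sqrt G := Real.sqrt_nonneg _
  refine ⟨?_, ?_, ?_⟩
  · refine le_trans key ?_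
    have hpos : (0:ℝ) < dist A B := dist_pos.2 hAB
    calc Real.sqrt G / M ^ 2 ≤ Real.sqrt G / (dist A B) ^ 2 := by
          gcongr
      _ = (Real.sqrt G / dist A B) / dist A B := by rw [div_div, sq]
      _ ≤ _ := by gcongr; exact line_lb A B C hAB
  · refine le_trans key ?_
    have hpos : (0:ℝ) < dist B C := dist_pos.2 hBC
    calc Real.sqrt G / M ^ 2 ≤ Real.sqrt G / (dist B C) ^ 2 := by
          gcongr
      _ = (Real.sqrt G / dist B C) / dist B C := by rw [div_div, sq]
      _ ≤ _ := by
          gcongr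
          rw [← hGBCA]
          exact line_lb B C A hBC
  · refine le_trans key ?_
    have hpos : (0:ℝ) < dist A C := dist_pos.2 hAC
    calc Real.sqrt G / M ^ 2 ≤ Real.sqrt G / (dist A C) ^ 2 := by
          gcongr
      _ = (Real.sqrt G / dist A C) / dist A C := by rw [div_div, sq]
      _ ≤ _ := by
          gcongr
          rw [← hGACB]
          exact line_lb A C B hAC
end
end

section
/- Let A, B, C ∈ ℝ² be noncollinear, let r be the resolution of the triangle ABC, let Y be the y-extent of the triangle (the maximum minus the minimum of the y-coordinates of A, B, C) and let X be its x-extent (the maximum minus the minimum of the x-coordinates of A, B, C). Then X ≤ Y / r, i.e., r · X ≤ Y. -/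
noncomputable section

lemma dist_eq_of_fst_eq' (P Q : Pt) (h : P 0 = Q 0) : dist P Q = |P 1 - Q 1| := by
  rw [EuclideanSpace.dist_eq, Fin.sum_univ_two, h, Real.dist_eq, Real.dist_eq]
  simp [Real.sqrt_sq_eq_abs, sq_abs]

lemma abs_fst_sub_le' (P Q : Pt) : |P 0 - Q 0| ≤ dist P Q := by
  rw [EuclideanSpace.dist_eq, Fin.sum_univ_two, Real.dist_eq, Real.dist_eq]
  calc |P 0 - Q 0| = Real.sqrt (|P 0 - Q 0| ^ 2) := (Real.sqrt_sq (abs_nonneg _)).symm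
    _ ≤ _ := Real.sqrt_le_sqrt (le_add_of_nonneg_right (by positivity))

lemma infDist_le_yext' (P U V : Pt) (hUV : U 0 ≤ V 0) (h1 : U 0 ≤ P 0) (h2 : P 0 ≤ V 0) :
    Metric.infDist P (segment ℝ U V) ≤
      max (P 1) (max (U 1) (V 1)) - min (P 1) (min (U 1) (V 1)) := by
  obtain ⟨Q, hQmem, hQ0, hQlo, hQhi⟩ :
      ∃ Q ∈ segment ℝ U V, Q 0 = P 0 ∧ min (U 1) (V 1) ≤ Q 1 ∧ Q 1 ≤ max (U 1) (V 1) := by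
    rcases eq_or_lt_of_le hUV with he | hlt
    · have hP : P 0 = U 0 := le_antisymm (he ▸ h2) h1
      exact ⟨U, left_mem_segment _ _ _, hP.symm, min_le_left _ _, le_max_left _ _⟩
    · set t : ℝ := (P 0 - U 0) / (V 0 - U 0) with ht
      have hd : 0 < V 0 - U 0 := by linarith
      have ht0 : 0 ≤ t := div_nonneg (by linarith) hd.le
      have ht1 : t ≤ 1 := by
        rw [div_le_one hd]; linarith
      refine ⟨(1 - t) • U + t • V, ?_, ?_, ?_, ?_⟩
      · exact ⟨1 - t, t, by linarith, ht0, by ring, rfl⟩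
      · have : ((1 - t) • U + t • V) 0 = (1 - t) * U 0 + t * V 0 := by simp
        rw [this, ht]; field_simp; ring
      · have : ((1 - t) • U + t • V) 1 = (1 - t) * U 1 + t * V 1 := by simp
        rw [this]
        rcases le_total (U 1) (V 1) with hy | hy <;> simp [min_def, hy] <;> nlinarith
      · have : ((1 - t) • U + t • V) 1 = (1 - t) * U 1 + t * V 1 := by simp
        rw [this]
        rcases le_total (U 1) (V 1) with hy | hy <;> simp [max_def, hy] <;> nlinarith
  calc Metric.infDist P (segment ℝ U V) ≤ dist P Q := Metric.infDist_le_dist_of_mem hQmem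
    _ = |P 1 - Q 1| := dist_eq_of_fst_eq' _ _ hQ0.symm
    _ ≤ _ := by
        rw [abs_sub_le_iff]
        constructor <;>
        · have h1 := min_le_left (P 1) (min (U 1) (V 1))
          have h2 := le_max_left (P 1) (max (U 1) (V 1))
          have h3 := (min_le_right (P 1) (min (U 1) (V 1)))
          have h4 := (le_max_right (P 1) (max (U 1) (V 1)))
          linarith

/-- The `x`-extent of a triangle is at most its `y`-extent divided by its resolution. -/
theorem xExtent_le_yExtent_div_triResolution (A B C : Pt)
    (h : ¬ Collinear ℝ ({A, B, C} : Set Pt)) (r X Y : ℝ)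
    (hr : r = triResolution A B C)
    (hY : Y = max (A 1) (max (B 1) (C 1)) - min (A 1) (min (B 1) (C 1)))
    (hX : X = max (A 0) (max (B 0) (C 0)) - min (A 0) (min (B 0) (C 0))) :
    r * X ≤ Y := by
  rw [hr, triResolution]
  set m := min (Metric.infDist A (segment ℝ B C))
      (min (Metric.infDist B (segment ℝ A C)) (Metric.infDist C (segment ℝ A B))) with hm
  set M := max (dist A B) (max (dist B C) (dist A C)) with hM
  have hMpos : 0 < M := by
    have hAB : A ≠ B := by rintro rfl; exact h (by simpa using collinear_pair ℝ A C)
    exact lt_max_of_lt_left (dist_pos.2 hAB)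
  have hm0 : 0 ≤ m :=
    le_min Metric.infDist_nonneg (le_min Metric.infDist_nonneg Metric.infDist_nonneg)
  have mA : m ≤ Metric.infDist A (segment ℝ B C) := min_le_left _ _
  have mB : m ≤ Metric.infDist B (segment ℝ A C) := (min_le_right _ _).trans (min_le_left _ _)
  have mC : m ≤ Metric.infDist C (segment ℝ A B) := (min_le_right _ _).trans (min_le_right _ _)
  have hXM : X ≤ M := by
    have hAB : |A 0 - B 0| ≤ M :=
      (abs_fst_sub_le' A B).trans (le_max_left (dist A B) (max (dist B C) (dist A C)))
    have hBC : |B 0 - C 0| ≤ M :=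
      (abs_fst_sub_le' B C).trans (le_trans (le_max_left (dist B C) (dist A C))
        (le_max_right (dist A B) (max (dist B C) (dist A C))))
    have hAC : |A 0 - C 0| ≤ M :=
      (abs_fst_sub_le' A C).trans (le_trans (le_max_right (dist B C) (dist A C))
        (le_max_right (dist A B) (max (dist B C) (dist A C))))
    rw [abs_le] at hAB hBC hAC
    rw [hX]
    rcases le_total (A 0) (B 0) with h1 | h1 <;> rcases le_total (B 0) (C 0) with h2 | h2 <;>
      rcases le_total (A 0) (C 0) with h3 | h3 <;>
      simp [max_def, min_def, h1, h2, h3] <;> linarith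
  have hX0 : 0 ≤ X := by
    have h1 : min (A 0) (min (B 0) (C 0)) ≤ A 0 := min_le_left _ _
    have h2 : A 0 ≤ max (A 0) (max (B 0) (C 0)) := le_max_left _ _
    rw [hX]; linarith
  have hmY : m ≤ Y := by
    have perm : ∀ a b c : ℝ, max a (max b c) = max b (max a c) ∧
        min a (min b c) = min b (min a c) := by
      intro a b c
      constructor
      · rw [max_left_comm]
      · rw [min_left_comm]
    rcases le_total (A 0) (B 0) with h1 | h1
    · rcases le_total (B 0) (C 0) with h2 | h2
      · -- A ≤ B ≤ C, median B
        refine mB.trans ((infDist_le_yext' B A C (h1.trans h2) h1 h2).trans ?_)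
        rw [hY, (perm (A 1) (B 1) (C 1)).1, (perm (A 1) (B 1) (C 1)).2]
      · rcases le_total (A 0) (C 0) with h3 | h3
        · -- A ≤ C ≤ B, median C
          refine mC.trans ((infDist_le_yext' C A B h1 h3 h2).trans ?_)
          rw [hY]
          rw [show max (C 1) (max (A 1) (B 1)) = max (A 1) (max (B 1) (C 1)) by
            rw [max_left_comm, max_comm (C 1)]]
          rw [show min (C 1) (min (A 1) (B 1)) = min (A 1) (min (B 1) (C 1)) by
            rw [min_left_comm, min_comm (C 1)]]
        · -- C ≤ A ≤ B, median A
          rw [segment_symm] at mA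
          refine mA.trans ((infDist_le_yext' A C B (h3.trans h1) h3 h1).trans ?_)
          rw [hY]
          rw [show max (A 1) (max (C 1) (B 1)) = max (A 1) (max (B 1) (C 1)) by
            rw [max_comm (C 1)]]
          rw [show min (A 1) (min (C 1) (B 1)) = min (A 1) (min (B 1) (C 1)) by
            rw [min_comm (C 1)]]
    · rcases le_total (B 0) (C 0) with h2 | h2
      · rcases le_total (A 0) (C 0) with h3 | h3
        · -- B ≤ A ≤ C, median A
          refine mA.trans ((infDist_le_yext' A B C h2 h1 h3).trans ?_)
          rw [hY]
        · -- B ≤ C ≤ A, median C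
          rw [segment_symm] at mC
          refine mC.trans ((infDist_le_yext' C B A h1 h2 h3).trans ?_)
          rw [hY]
          rw [show max (C 1) (max (B 1) (A 1)) = max (A 1) (max (B 1) (C 1)) by
            rw [max_comm (B 1), max_left_comm, max_comm (C 1)]]
          rw [show min (C 1) (min (B 1) (A 1)) = min (A 1) (min (B 1) (C 1)) by
            rw [min_comm (B 1), min_left_comm, min_comm (C 1)]]
      · -- C ≤ B ≤ A, median B
        rw [segment_symm] at mB
        refine mB.trans ((infDist_le_yext' B C A (h2.trans h1) h2 h1).trans ?_)
        rw [hY]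
        rw [show max (B 1) (max (C 1) (A 1)) = max (A 1) (max (B 1) (C 1)) by
          rw [max_comm (C 1), max_left_comm]]
        rw [show min (B 1) (min (C 1) (A 1)) = min (A 1) (min (B 1) (C 1)) by
          rw [min_comm (C 1), min_left_comm]]
  rw [div_mul_eq_mul_div, div_le_iff₀ hMpos]
  nlinarith [hm0, hXM, hmY, hX0, hMpos.le]
end
end

section
/- Let ι be a finite index set, let λ : ι → ℝ satisfy λ_i > 0 for all i and Σ_i λ_i = 1, let y : ι → ℝ and let c = Σ_i λ_i·y_i, and suppose c > 0. Suppose there are two distinct indices w, q ∈ ι such that y_q = 0, λ_q > 1/4, and y_i ≤ c for every index i ≠ w. Then c < (3/4)·y_w. -/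
/-- If a positive convex combination `c` has a zero value of coefficient exceeding `1/4`
and all values other than `y w` are at most `c`, then `c < (3/4)·y w`. -/
theorem convex_combination_apex_bound
    {ι : Type*} [Fintype ι] (lam : ι → ℝ) (hpos : ∀ i, 0 < lam i)
    (hsum : ∑ i, lam i = 1) (y : ι → ℝ) (c : ℝ) (hc : c = ∑ i, lam i * y i)
    (hcpos : 0 < c) (w q : ι) (hwq : w ≠ q)
    (hyq : y q = 0) (hlamq : 1 / 4 < lam q)
    (hle : ∀ i, i ≠ w → y i ≤ c) :
    c < 3 / 4 * y w := by
  classical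
  set s : Finset ι := (Finset.univ.erase w).erase q with hs
  have hqmem : q ∈ Finset.univ.erase w := by
    simp [Ne.symm hwq]
  have hwmem : w ∈ (Finset.univ : Finset ι) := Finset.mem_univ w
  have hsplit : ∀ f : ι → ℝ, ∑ i, f i = f w + f q + ∑ i ∈ s, f i := by
    intro f
    rw [← Finset.add_sum_erase _ f hwmem, ← Finset.add_sum_erase _ f hqmem, hs]
    ring
  have h1 : c = lam w * y w + ∑ i ∈ s, lam i * y i := by
    rw [hc, hsplit (fun i => lam i * y i), hyq]; ring
  have h2 : lam w + lam q + ∑ i ∈ s, lam i = 1 := by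
    rw [← hsplit lam, hsum]
  have h3 : ∑ i ∈ s, lam i * y i ≤ (∑ i ∈ s, lam i) * c := by
    rw [Finset.sum_mul]
    apply Finset.sum_le_sum
    intro i hi
    have hiw : i ≠ w := Finset.ne_of_mem_erase (Finset.mem_of_mem_erase hi)
    exact mul_le_mul_of_nonneg_left (hle i hiw) (hpos i).le
  have h4 : 0 ≤ ∑ i ∈ s, lam i := Finset.sum_nonneg fun i _ => (hpos i).le
  have key : (lam w + lam q) * c ≤ lam w * y w := by nlinarith
  nlinarith [hpos w, hpos q, mul_pos (hpos w) hcpos]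
end

section
/- Let m ≥ 1, let 0 < λ ≤ 1/4 and let x : ℕ → ℝ be a sequence such that x_{i+1} < x_i for every i with 0 ≤ i ≤ m − 1, and x_i = λ·(x_{i−1} + x_{i+1}) for every i with 1 ≤ i ≤ m − 1. Then x_i ≤ (λ/(1−λ))^i · x_0 for every i with 0 ≤ i ≤ m − 1; in particular x_{m−1} ≤ (λ/(1−λ))^{m−1} · x_0. -/
/-- A strictly decreasing sequence satisfying the recurrence `x i = λ·(x (i-1) + x (i+1))`
decreases at least geometrically with ratio `λ/(1-λ)`. -/
theorem geometric_decay_of_recurrence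
    (m : ℕ) (hm : 1 ≤ m) (lam : ℝ) (hlam : 0 < lam) (hlam4 : lam ≤ 1 / 4)
    (x : ℕ → ℝ) (hdec : ∀ i, i ≤ m - 1 → x (i + 1) < x i)
    (hrec : ∀ i, 1 ≤ i → i ≤ m - 1 → x i = lam * (x (i - 1) + x (i + 1))) :
    (∀ i, i ≤ m - 1 → x i ≤ (lam / (1 - lam)) ^ i * x 0) ∧
    x (m - 1) ≤ (lam / (1 - lam)) ^ (m - 1) * x 0 := by
  have h1l : (0:ℝ) < 1 - lam := by linarith
  have hr : 0 < lam / (1 - lam) := div_pos hlam h1l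
  have main : ∀ i, i ≤ m - 1 → x i ≤ (lam / (1 - lam)) ^ i * x 0 := by
    intro i
    induction i with
    | zero => intro _; simp
    | succ n ih =>
      intro h
      have hn : n ≤ m - 1 := Nat.le_of_succ_le h
      have h1 := hrec (n + 1) (by omega) h
      have h2 := hdec (n + 1) h
      simp only [Nat.add_sub_cancel] at h1
      have key : x (n + 1) ≤ (lam / (1 - lam)) * x n := by
        rw [div_mul_eq_mul_div, le_div_iff₀ h1l]
        nlinarith
      calc x (n + 1) ≤ (lam / (1 - lam)) * x n := key
        _ ≤ (lam / (1 - lam)) * ((lam / (1 - lam)) ^ n * x 0) :=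
            mul_le_mul_of_nonneg_left (ih hn) hr.le
        _ = (lam / (1 - lam)) ^ (n + 1) * x 0 := by ring
  exact ⟨main, main (m - 1) le_rfl⟩
end

section
/- Let m ≥ 1 and 0 < λ ≤ 1/4, and let y : ℕ → ℝ satisfy y_0 = 0, y_i = λ·(y_{i−1} + y_{i+1}) for every i with 1 ≤ i ≤ m − 1, and y_m = λ·y_{m−1}. Then y_i = 0 for every i with 0 ≤ i ≤ m. -/
/-- The tridiagonal system `y 0 = 0`, `y i = λ·(y (i-1) + y (i+1))` for `1 ≤ i ≤ m-1`,
`y m = λ·y (m-1)` has only the zero solution. -/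
theorem tridiagonal_zero_solution
    (m : ℕ) (hm : 1 ≤ m) (lam : ℝ) (hlam : 0 < lam) (hlam4 : lam ≤ 1 / 4)
    (y : ℕ → ℝ) (hy0 : y 0 = 0)
    (hrec : ∀ i, 1 ≤ i → i ≤ m - 1 → y i = lam * (y (i - 1) + y (i + 1)))
    (hlast : y m = lam * y (m - 1)) :
    ∀ i, i ≤ m → y i = 0 := by
  obtain ⟨i0, hi0mem, hmax⟩ := (Finset.range (m + 1)).exists_max_image (fun i => |y i|)
    ⟨0, Finset.mem_range.mpr (Nat.succ_pos m)⟩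
  simp only [Finset.mem_range, Nat.lt_succ_iff] at hi0mem
  set M := |y i0| with hM
  have hMnonneg : 0 ≤ M := abs_nonneg _
  have hbound : ∀ j, j ≤ m → |y j| ≤ M := fun j hj =>
    hmax j (Finset.mem_range.mpr (Nat.lt_succ_of_le hj))
  have hM0 : M = 0 := by
    by_contra hne
    have hMpos : 0 < M := lt_of_le_of_ne hMnonneg (Ne.symm hne)
    have key : M ≤ M / 2 := by
      rcases Nat.eq_zero_or_pos i0 with h0 | hpos
      · rw [hM, h0, hy0] at hMpos; simp at hMpos
      · rcases eq_or_lt_of_le hi0mem with heq | hlt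
        · -- i0 = m
          have : |y m| ≤ lam * |y (m - 1)| := by
            rw [hlast, abs_mul, abs_of_pos hlam]
          calc M = |y m| := by rw [hM, heq]
            _ ≤ lam * |y (m - 1)| := this
            _ ≤ (1/4) * M := by
                apply mul_le_mul hlam4 (hbound _ (Nat.sub_le m 1)) (abs_nonneg _)
                norm_num
            _ ≤ M / 2 := by linarith
        · -- 1 ≤ i0 ≤ m - 1
          have hle : i0 ≤ m - 1 := Nat.le_sub_one_of_lt hlt
          have hrec' := hrec i0 hpos hle
          have h1 : |y (i0 - 1)| ≤ M := hbound _ (le_trans (Nat.sub_le _ _) hi0mem)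
          have h2 : |y (i0 + 1)| ≤ M := hbound _ (Nat.succ_le_of_lt hlt)
          calc M = |y i0| := hM
            _ = lam * |y (i0 - 1) + y (i0 + 1)| := by
                rw [hrec', abs_mul, abs_of_pos hlam]
            _ ≤ lam * (|y (i0 - 1)| + |y (i0 + 1)|) := by
                apply mul_le_mul_of_nonneg_left (abs_add_le _ _) hlam.le
            _ ≤ (1/4) * (M + M) := by
                apply mul_le_mul hlam4 (add_le_add h1 h2)
                  (by positivity) (by norm_num)
            _ = M / 2 := by ring
    linarith
  intro i hi
  have := hbound i hi
  rw [hM0] at this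
  exact abs_eq_zero.mp (le_antisymm this (abs_nonneg _))
end

section
/- Let G be a simple graph on a finite vertex set V and let p : V → ℝ² be a planar straight-line drawing of G such that the distance between any two separated geometric objects of the drawing is at least d, where d > 0. Let p' : V → ℝ² be any map such that for every vertex v, both coordinates of p'(v) differ from the corresponding coordinates of p(v) by at most d/3. Then p' is also a planar straight-line drawing of G. -/
noncomputable section

/-- `p` is a planar straight-line drawing of `G`: it is injective, segments of edges
sharing no endpoint are disjoint, and no vertex point lies on the segment of a
non-incident edge. -/
def IsPlanarDrawing {V : Type*} (G : SimpleGraph V) (p : V → Pt) : Prop :=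
  Function.Injective p ∧
  (∀ u₁ w₁ u₂ w₂ : V, G.Adj u₁ w₁ → G.Adj u₂ w₂ → u₁ ≠ u₂ → u₁ ≠ w₂ → w₁ ≠ u₂ → w₁ ≠ w₂ →
     Disjoint (segment ℝ (p u₁) (p w₁)) (segment ℝ (p u₂) (p w₂))) ∧
  (∀ v u w : V, G.Adj u w → v ≠ u → v ≠ w → p v ∉ segment ℝ (p u) (p w))

/-- The pairs of separated geometric objects of the drawing `p` of `G`:
two distinct vertices, a vertex and a non-incident edge, or two edges sharing no
endpoint. -/
def sepPairs {V : Type*} (G : SimpleGraph V) (p : V → Pt) : Set (Set Pt × Set Pt) :=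
  {op | (∃ u v : V, u ≠ v ∧ op = ({p u}, {p v}))
      ∨ (∃ v u w : V, G.Adj u w ∧ v ≠ u ∧ v ≠ w ∧ op = ({p v}, segment ℝ (p u) (p w)))
      ∨ (∃ u₁ w₁ u₂ w₂ : V, G.Adj u₁ w₁ ∧ G.Adj u₂ w₂ ∧ u₁ ≠ u₂ ∧ u₁ ≠ w₂ ∧ w₁ ≠ u₂ ∧ w₁ ≠ w₂ ∧
          op = (segment ℝ (p u₁) (p w₁), segment ℝ (p u₂) (p w₂)))}

/-- The distance between two geometric objects: the infimum of the distances between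
their points. -/
noncomputable def objDist (s t : Set Pt) : ℝ := sInf (Set.image2 dist s t)

/-- The resolution of a drawing: the ratio of the minimum to the maximum of the
distances over all pairs of separated geometric objects. -/
noncomputable def drawingResolution {V : Type*} (G : SimpleGraph V) (p : V → Pt) : ℝ :=
  sInf ((fun op => objDist op.1 op.2) '' sepPairs G p) /
  sSup ((fun op => objDist op.1 op.2) '' sepPairs G p)

lemma objDist_le_dist {s t : Set Pt} {x y : Pt} (hx : x ∈ s) (hy : y ∈ t) :
    objDist s t ≤ dist x y := by
  apply csInf_le
  · exact ⟨0, fun r hr => by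
      obtain ⟨a, _, b, _, rfl⟩ := hr
      exact dist_nonneg⟩
  · exact Set.mem_image2_of_mem hx hy

lemma seg_move {a b a' b' : Pt} {c : ℝ} (ha : dist a' a ≤ c) (hb : dist b' b ≤ c)
    {x : Pt} (hx : x ∈ segment ℝ a' b') : ∃ y ∈ segment ℝ a b, dist x y ≤ c := by
  obtain ⟨s, t, hs, ht, hst, rfl⟩ := hx
  refine ⟨s • a + t • b, ⟨s, t, hs, ht, hst, rfl⟩, ?_⟩
  rw [dist_eq_norm]
  have h1 : s • a' + t • b' - (s • a + t • b) = s • (a' - a) + t • (b' - b) := by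
    module
  rw [h1]
  have h2 : ‖s • (a' - a) + t • (b' - b)‖ ≤ s * ‖a' - a‖ + t * ‖b' - b‖ := by
    calc ‖s • (a' - a) + t • (b' - b)‖ ≤ ‖s • (a' - a)‖ + ‖t • (b' - b)‖ := norm_add_le _ _
    _ = s * ‖a' - a‖ + t * ‖b' - b‖ := by
        rw [norm_smul, norm_smul, Real.norm_of_nonneg hs, Real.norm_of_nonneg ht]
  have ha' : ‖a' - a‖ ≤ c := by rwa [← dist_eq_norm]
  have hb' : ‖b' - b‖ ≤ c := by rwa [← dist_eq_norm]
  nlinarith [norm_nonneg (a' - a), norm_nonneg (b' - b)]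

/-- Perturbing each coordinate of each vertex of a planar straight-line drawing by at
most a third of the minimum distance between separated objects keeps the drawing
planar. -/
theorem perturbation_keeps_planar
    {V : Type*} (G : SimpleGraph V) (p : V → Pt) (hplanar : IsPlanarDrawing G p)
    (d : ℝ) (hd : 0 < d)
    (hsep : ∀ op ∈ sepPairs G p, d ≤ objDist op.1 op.2)
    (p' : V → Pt) (hpert : ∀ v : V, ∀ i : Fin 2, |p' v i - p v i| ≤ d / 3) :
    IsPlanarDrawing G p' := by
  set c : ℝ := Real.sqrt 2 * (d / 3) with hc_def
  have hsqrt : Real.sqrt 2 < 3 / 2 := by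
    rw [show (3 / 2 : ℝ) = Real.sqrt ((3 / 2) ^ 2) from
      (Real.sqrt_sq (by norm_num)).symm]
    exact Real.sqrt_lt_sqrt (by norm_num) (by norm_num)
  have hsqrt0 : (0 : ℝ) ≤ Real.sqrt 2 := Real.sqrt_nonneg 2
  have hc2 : 2 * c < d := by
    rw [hc_def]; nlinarith
  have hc0 : 0 ≤ c := by positivity
  have hmove : ∀ v, dist (p' v) (p v) ≤ c := by
    intro v
    rw [EuclideanSpace.dist_eq]
    have key : ∀ i : Fin 2, dist (p' v i) (p v i) ^ 2 ≤ (d / 3) ^ 2 := by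
      intro i
      have := hpert v i
      rw [Real.dist_eq]
      nlinarith [abs_nonneg (p' v i - p v i), sq_abs (p' v i - p v i)]
    have hsum : ∑ i : Fin 2, dist (p' v i) (p v i) ^ 2 ≤ 2 * (d / 3) ^ 2 := by
      rw [Fin.sum_univ_two]
      linarith [key 0, key 1]
    calc Real.sqrt (∑ i : Fin 2, dist (p' v i) (p v i) ^ 2)
        ≤ Real.sqrt (2 * (d / 3) ^ 2) := Real.sqrt_le_sqrt hsum
      _ = Real.sqrt 2 * (d / 3) := by
          rw [Real.sqrt_mul (by norm_num), Real.sqrt_sq (by positivity)]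
  refine ⟨?_, ?_, ?_⟩
  · intro u v huv
    by_contra hne
    have hmem : (({p u}, {p v}) : Set Pt × Set Pt) ∈ sepPairs G p :=
      Or.inl ⟨u, v, hne, rfl⟩
    have hd' := hsep _ hmem
    have hle : objDist {p u} {p v} ≤ dist (p u) (p v) :=
      objDist_le_dist rfl rfl
    have h1 : dist (p u) (p v) ≤ dist (p u) (p' u) + dist (p' u) (p v) :=
      dist_triangle _ _ _
    rw [huv] at h1
    have h2 := hmove u
    have h3 := hmove v
    rw [dist_comm] at h2 h3
    rw [huv] at h2
    rw [dist_comm] at h3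
    simp only at hd' hle
    linarith
  · intro u₁ w₁ u₂ w₂ h1 h2 n1 n2 n3 n4
    rw [Set.disjoint_left]
    intro x hx1 hx2
    obtain ⟨y1, hy1, hd1⟩ := seg_move (hmove u₁) (hmove w₁) hx1
    obtain ⟨y2, hy2, hd2⟩ := seg_move (hmove u₂) (hmove w₂) hx2
    have hmem : ((segment ℝ (p u₁) (p w₁), segment ℝ (p u₂) (p w₂)) : Set Pt × Set Pt)
        ∈ sepPairs G p := Or.inr (Or.inr ⟨u₁, w₁, u₂, w₂, h1, h2, n1, n2, n3, n4, rfl⟩)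
    have hd' := hsep _ hmem
    have hle : objDist (segment ℝ (p u₁) (p w₁)) (segment ℝ (p u₂) (p w₂)) ≤ dist y1 y2 :=
      objDist_le_dist hy1 hy2
    have htri : dist y1 y2 ≤ dist y1 x + dist x y2 := dist_triangle _ _ _
    rw [dist_comm y1 x] at htri
    simp only at hd' hle
    linarith
  · intro v u w h hn1 hn2 hx
    obtain ⟨y, hy, hdy⟩ := seg_move (hmove u) (hmove w) hx
    have hmem : (({p v}, segment ℝ (p u) (p w)) : Set Pt × Set Pt) ∈ sepPairs G p :=
      Or.inr (Or.inl ⟨v, u, w, h, hn1, hn2, rfl⟩)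
    have hd' := hsep _ hmem
    have hle : objDist {p v} (segment ℝ (p u) (p w)) ≤ dist (p v) y :=
      objDist_le_dist rfl hy
    have htri : dist (p v) y ≤ dist (p v) (p' v) + dist (p' v) y := dist_triangle _ _ _
    have h2 := hmove v
    rw [dist_comm] at h2
    simp only at hd' hle
    linarith
end
end

section
/- Let m ≥ 1, let a ≤ b be real numbers, and let f : ℝ → ℝ^m be a curve such that for each coordinate index l ∈ {1, …, m}, the real function t ↦ f(t)_l is monotone (either nondecreasing or nonincreasing) on the interval [a, b]. Then the total variation of f on [a, b] (with respect to the Euclidean norm on ℝ^m) is at most Σ_{l=1}^{m} |f(b)_l − f(a)_l|. -/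
open scoped ENNReal

lemma sum_abs_sub_le_of_monotone_or_antitone {a b : ℝ} (hab : a ≤ b) (g : ℝ → ℝ)
    (hg : MonotoneOn g (Set.Icc a b) ∨ AntitoneOn g (Set.Icc a b))
    (u : ℕ → ℝ) (hu : Monotone u) (hus : ∀ i, u i ∈ Set.Icc a b) (n : ℕ) :
    ∑ i ∈ Finset.range n, |g (u (i + 1)) - g (u i)| ≤ |g b - g a| := by
  have ha : a ∈ Set.Icc a b := Set.left_mem_Icc.2 hab
  have hb : b ∈ Set.Icc a b := Set.right_mem_Icc.2 hab
  rcases hg with hg | hg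
  · have : ∀ i ∈ Finset.range n, |g (u (i + 1)) - g (u i)| = g (u (i + 1)) - g (u i) := by
      intro i _
      exact abs_of_nonneg (sub_nonneg.2 (hg (hus i) (hus (i + 1)) (hu (Nat.le_succ i))))
    rw [Finset.sum_congr rfl this, Finset.sum_range_sub (fun i => g (u i))]
    calc g (u n) - g (u 0) ≤ g b - g a := by
          have h1 := hg (hus n) hb (hus n).2
          have h2 := hg ha (hus 0) (hus 0).1
          linarith
      _ ≤ |g b - g a| := le_abs_self _
  · have : ∀ i ∈ Finset.range n, |g (u (i + 1)) - g (u i)| = g (u i) - g (u (i + 1)) := by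
      intro i _
      rw [abs_of_nonpos (sub_nonpos.2 (hg (hus i) (hus (i + 1)) (hu (Nat.le_succ i))))]; ring
    rw [Finset.sum_congr rfl this, Finset.sum_range_sub' (fun i => g (u i))]
    calc g (u 0) - g (u n) ≤ g a - g b := by
          have h1 := hg (hus n) hb (hus n).2
          have h2 := hg ha (hus 0) (hus 0).1
          linarith
      _ ≤ |g b - g a| := by rw [abs_sub_comm]; exact le_abs_self _

lemma euclidean_dist_le_sum_abs {m : ℕ} (x y : EuclideanSpace ℝ (Fin m)) :
    dist x y ≤ ∑ l : Fin m, |x l - y l| := by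
  rw [EuclideanSpace.dist_eq]
  have h1 : ∑ l : Fin m, dist (x l) (y l) ^ 2 ≤ (∑ l : Fin m, dist (x l) (y l)) ^ 2 :=
    Finset.sum_sq_le_sq_sum_of_nonneg (fun i _ => dist_nonneg)
  calc Real.sqrt (∑ l : Fin m, dist (x l) (y l) ^ 2)
      ≤ Real.sqrt ((∑ l : Fin m, dist (x l) (y l)) ^ 2) := Real.sqrt_le_sqrt h1
    _ = ∑ l : Fin m, dist (x l) (y l) :=
        Real.sqrt_sq (Finset.sum_nonneg fun i _ => dist_nonneg)
    _ = ∑ l : Fin m, |x l - y l| := by simp [Real.dist_eq]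

/-- The total variation on `[a, b]` of a curve in `ℝ^m` that is coordinatewise monotone
is at most the sum of the coordinate extents. -/
theorem eVariationOn_le_sum_of_coordinatewise_monotone
    (m : ℕ) (hm : 1 ≤ m) (a b : ℝ) (hab : a ≤ b)
    (f : ℝ → EuclideanSpace ℝ (Fin m))
    (hmono : ∀ l : Fin m, MonotoneOn (fun t => f t l) (Set.Icc a b) ∨
      AntitoneOn (fun t => f t l) (Set.Icc a b)) :
    eVariationOn f (Set.Icc a b) ≤ ENNReal.ofReal (∑ l : Fin m, |f b l - f a l|) := by
  apply iSup_le
  rintro ⟨n, ⟨u, hu, hus⟩⟩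
  have : ∑ i ∈ Finset.range n, edist (f (u (i + 1))) (f (u i))
      = ENNReal.ofReal (∑ i ∈ Finset.range n, dist (f (u (i + 1))) (f (u i))) := by
    rw [ENNReal.ofReal_sum_of_nonneg (fun i _ => dist_nonneg)]
    simp [edist_dist]
  rw [this]
  apply ENNReal.ofReal_le_ofReal
  calc ∑ i ∈ Finset.range n, dist (f (u (i + 1))) (f (u i))
      ≤ ∑ i ∈ Finset.range n, ∑ l : Fin m, |f (u (i + 1)) l - f (u i) l| :=
        Finset.sum_le_sum fun i _ => euclidean_dist_le_sum_abs _ _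
    _ = ∑ l : Fin m, ∑ i ∈ Finset.range n, |f (u (i + 1)) l - f (u i) l| :=
        Finset.sum_comm
    _ ≤ ∑ l : Fin m, |f b l - f a l| :=
        Finset.sum_le_sum fun l _ =>
          sum_abs_sub_le_of_monotone_or_antitone hab (fun t => f t l) (hmono l) u hu hus n
end

section
/- Let a, b, c ∈ ℝ² be three points all of whose coordinates are integers, and suppose a, b, c are not collinear. Then the Euclidean distance from c to the line through a and b is at least 1 / dist(a, b). -/
/-- Cauchy-Schwarz-type bound for the 2×2 determinant. -/
lemma det_abs_le_mul (x0 x1 y0 y1 : ℝ) :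
    |x0 * y1 - x1 * y0| ≤ Real.sqrt (x0 ^ 2 + x1 ^ 2) * Real.sqrt (y0 ^ 2 + y1 ^ 2) := by
  rw [← Real.sqrt_mul (by positivity)]
  have h : (x0 * y1 - x1 * y0) ^ 2 ≤ (x0 ^ 2 + x1 ^ 2) * (y0 ^ 2 + y1 ^ 2) := by
    nlinarith [sq_nonneg (x0 * y0 + x1 * y1)]
  have := Real.sqrt_le_sqrt h
  rwa [Real.sqrt_sq_eq_abs] at this

/-- For a nondegenerate lattice triangle in the plane, the distance from a vertex to
the line through the other two is at least the reciprocal of their distance. -/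
theorem lattice_triangle_height_lower_bound
    (a b c : EuclideanSpace ℝ (Fin 2))
    (ha : ∀ i : Fin 2, ∃ z : ℤ, a i = z)
    (hb : ∀ i : Fin 2, ∃ z : ℤ, b i = z)
    (hc : ∀ i : Fin 2, ∃ z : ℤ, c i = z)
    (h : ¬ Collinear ℝ ({a, b, c} : Set (EuclideanSpace ℝ (Fin 2)))) :
    1 / dist a b ≤ Metric.infDist c (affineSpan ℝ {a, b} : Set (EuclideanSpace ℝ (Fin 2))) := by
  classical
  -- notation for determinant
  set D : ℝ := (b 0 - a 0) * (c 1 - a 1) - (b 1 - a 1) * (c 0 - a 0) with hD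
  obtain ⟨za0, ha0⟩ := ha 0
  obtain ⟨za1, ha1⟩ := ha 1
  obtain ⟨zb0, hb0⟩ := hb 0
  obtain ⟨zb1, hb1⟩ := hb 1
  obtain ⟨zc0, hc0⟩ := hc 0
  obtain ⟨zc1, hc1⟩ := hc 1
  -- D is nonzero: otherwise the three points are collinear
  have hDne : D ≠ 0 := by
    intro hD0
    apply h
    rw [collinear_iff_of_mem (Set.mem_insert a _)]
    refine ⟨b - a, ?_⟩
    intro p hp
    rcases hp with rfl | hp
    · exact ⟨0, by simp⟩
    rcases hp with rfl | hp
    · refine ⟨1, ?_⟩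
      ext i
      simp [PiLp.sub_apply]
    rcases hp with rfl
    -- p = c
    by_cases h0 : b 0 - a 0 ≠ 0
    · refine ⟨(p 0 - a 0) / (b 0 - a 0), ?_⟩
      ext i
      fin_cases i <;>
        simp only [PiLp.smul_apply, PiLp.sub_apply, smul_eq_mul] <;>
        · simp only [vadd_eq_add, PiLp.add_apply, PiLp.smul_apply, PiLp.sub_apply, smul_eq_mul, Fin.zero_eta, Fin.mk_one]
          field_simp
          all_goals nlinarith [hD0, hD]
    · push_neg at h0
      by_cases h1 : b 1 - a 1 ≠ 0
      · refine ⟨(p 1 - a 1) / (b 1 - a 1), ?_⟩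
        ext i
        fin_cases i <;>
          simp only [PiLp.smul_apply, PiLp.sub_apply, smul_eq_mul] <;>
          · simp only [vadd_eq_add, PiLp.add_apply, PiLp.smul_apply, PiLp.sub_apply, smul_eq_mul, Fin.zero_eta, Fin.mk_one]
            field_simp
            all_goals nlinarith [hD0, hD]
      · -- then a = b, so {a,b,c} is a pair, contradiction handled by collinearity directly
        push_neg at h1
        exfalso
        apply h
        have hba : b = a := by
          ext i
          fin_cases i
          · show b 0 = a 0; linarith
          · show b 1 = a 1; linarith
        rw [hba]
        simp [Set.insert_comm, Set.pair_comm]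
        exact (collinear_pair ℝ a p).subset (by intro x hx; simp at hx; tauto)
  -- D is an integer, hence |D| ≥ 1
  have hD1 : 1 ≤ |D| := by
    have : D = ((zb0 - za0) * (zc1 - za1) - (zb1 - za1) * (zc0 - za0) : ℤ) := by
      rw [hD, ha0, ha1, hb0, hb1, hc0, hc1]; push_cast; ring
    rw [this]
    rw [this] at hDne
    rw [← Int.cast_abs]
    have : (1 : ℤ) ≤ |((zb0 - za0) * (zc1 - za1) - (zb1 - za1) * (zc0 - za0) : ℤ)| := by
      have := Int.cast_injective (α := ℝ)
      refine Int.one_le_abs ?_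
      intro hzero
      apply hDne
      rw [hzero]; simp
    exact_mod_cast this
  -- a ≠ b
  have hab : a ≠ b := by
    rintro rfl
    apply h
    simp only [Set.insert_idem]
    exact collinear_pair ℝ a c
  have hdpos : 0 < dist a b := dist_pos.2 hab
  -- dist formulas
  have hdistab : dist a b = Real.sqrt ((b 0 - a 0) ^ 2 + (b 1 - a 1) ^ 2) := by
    rw [EuclideanSpace.dist_eq]
    congr 1
    rw [Fin.sum_univ_two]
    simp [Real.dist_eq, sq_abs]
    ring
  -- main bound: for every point p in the line, 1 ≤ dist a b * dist c p
  have key : ∀ p ∈ (affineSpan ℝ {a, b} : Set (EuclideanSpace ℝ (Fin 2))),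
      1 / dist a b ≤ dist c p := by
    intro p hp
    have hp' : (p - a) +ᵥ a ∈ line[ℝ, a, b] := by
      simpa [sub_add_cancel] using hp
    rw [vadd_left_mem_affineSpan_pair] at hp'
    obtain ⟨r, hr⟩ := hp'
    have hp0 : p 0 = r * (b 0 - a 0) + a 0 := by
      have := congrArg (fun v => v.ofLp 0) hr
      simp only [PiLp.smul_apply, PiLp.sub_apply, vsub_eq_sub, smul_eq_mul] at this
      linarith [this]
    have hp1 : p 1 = r * (b 1 - a 1) + a 1 := by
      have := congrArg (fun v => v.ofLp 1) hr
      simp only [PiLp.smul_apply, PiLp.sub_apply, vsub_eq_sub, smul_eq_mul] at this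
      linarith [this]
    have hdistcp : dist c p = Real.sqrt ((c 0 - p 0) ^ 2 + (c 1 - p 1) ^ 2) := by
      rw [EuclideanSpace.dist_eq]
      congr 1
      rw [Fin.sum_univ_two]
      simp [Real.dist_eq, sq_abs]
    have hdet : D = (b 0 - a 0) * (c 1 - p 1) - (b 1 - a 1) * (c 0 - p 0) := by
      rw [hD, hp0, hp1]; ring
    have hcs := det_abs_le_mul (b 0 - a 0) (b 1 - a 1) (c 0 - p 0) (c 1 - p 1)
    rw [← hdet, ← hdistab, ← hdistcp] at hcs
    have h1 : 1 ≤ dist a b * dist c p := le_trans hD1 hcs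
    rw [div_le_iff₀ hdpos]
    nlinarith [dist_nonneg (x := c) (y := p)]
  -- conclude via infDist
  by_contra hcon
  push_neg at hcon
  have hne : (affineSpan ℝ {a, b} : Set (EuclideanSpace ℝ (Fin 2))).Nonempty :=
    ⟨a, left_mem_affineSpan_pair ℝ a b⟩
  obtain ⟨y, hy, hylt⟩ := (Metric.infDist_lt_iff hne).1 hcon
  exact absurd hylt (not_lt.2 (key y hy))
end
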